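/- arXiv:math/0509257 — 4 statements merged into one kernel-verified Lean document; each statement's English description precedes it below -/
import Mathlib

section
/- Sector condition: if Γ = (V,q) is centered for m with cycle lengths bounded by C_0, then there exists a constant M depending only on C_0 such that for all finitely supported functions f, g on V, E(f,g)² ≤ M² E(f,f) E(g,g), where E(f,g) = Σ_{x,y∈V} m(x)q(x,y)g(x)(f(x)-f(y)). -/
open scoped Classical ENNReal NNReal

/-- The edge `(a,b)` belongs to the cycle with vertices `x 0, x 1, ..., x k` (where `x k = x 0`). -/
def IsEdge {V : Type*} (k : ℕ) (x : ℕ → V) (a b : V) : Prop :=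
  ∃ j, j < k ∧ x j = a ∧ x (j + 1) = b

/-- The graph `Γ = (V,q)` is centered for the measure `m`, witnessed by the family of
edge self-avoiding closed cycles `γ i = (vert i 0, ..., vert i (len i))` with positive
weights `w i` and uniform length bound `C0`, so that
`m x * q x y = ∑' i, w i · 1_{(x,y) ∈ γ i}`. -/
def Centered {V : Type*} (q : V → V → ℝ) (m : V → ℝ)
    (len : ℕ → ℕ) (vert : ℕ → ℕ → V) (w : ℕ → ℝ) (C0 : ℕ) : Prop :=
  (∀ i, 1 ≤ len i ∧ len i ≤ C0) ∧
  (∀ i, vert i (len i) = vert i 0) ∧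
  (∀ i j, j < len i → 0 < q (vert i j) (vert i (j + 1))) ∧
  (∀ i j j', j < len i → j' < len i →
      vert i j = vert i j' → vert i (j + 1) = vert i (j' + 1) → j = j') ∧
  (∀ i, 0 < w i) ∧
  (∀ x y, m x * q x y = ∑' i, if IsEdge (len i) (vert i) x y then w i else 0)


/-- The Dirichlet form `E(f,g) = ∑_{x,y} m(x) q(x,y) g(x) (f(x) - f(y))`. -/
noncomputable def dirichlet {V : Type*} (q : V → V → ℝ) (m : V → ℝ) (f g : V → ℝ) : ℝ :=
  ∑' p : V × V, m p.1 * q p.1 p.2 * g p.1 * (f p.1 - f p.2)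


section Aux
variable {V : Type} (q : V → V → ℝ) (m : V → ℝ) (len : ℕ → ℕ) (vert : ℕ → ℕ → V) (w : ℕ → ℝ)

/-- total weight of an edge, valued in `ℝ≥0∞`. -/
noncomputable def WE (x y : V) : ℝ≥0∞ :=
  ∑' i, if IsEdge (len i) (vert i) x y then ENNReal.ofReal (w i) else 0

lemma WE_toReal (hw : ∀ i, 0 < w i)
    (hrep : ∀ x y, m x * q x y = ∑' i, if IsEdge (len i) (vert i) x y then w i else 0)
    (x y : V) : m x * q x y = (WE len vert w x y).toReal := by
  rw [hrep x y]
  unfold WE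
  rw [ENNReal.tsum_toReal_eq (fun i => by split <;> simp)]
  exact tsum_congr fun i => by split <;> simp [ENNReal.toReal_ofReal (hw _).le]

lemma WE_summable (hw : ∀ i, 0 < w i) {x y : V} (h : WE len vert w x y ≠ ⊤) :
    Summable (fun i => if IsEdge (len i) (vert i) x y then w i else 0) := by
  have := ENNReal.summable_toReal h
  convert this using 1
  funext i; split <;> simp [ENNReal.toReal_ofReal (hw _).le]

lemma count_shift (n : ℕ) (xv : ℕ → V) (hcl : xv n = xv 0) (x : V) :
    ((Finset.range n).filter fun j => xv (j + 1) = x).card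
      = ((Finset.range n).filter fun j => xv j = x).card := by
  simp only [Finset.card_filter]
  have a1 := Finset.sum_range_succ (fun j => if xv j = x then 1 else 0) n
  have a2 := Finset.sum_range_succ' (fun j => if xv j = x then 1 else 0) n
  simp only [hcl] at a1
  omega

lemma tsum_ite_out (n : ℕ) (xv : ℕ → V)
    (hinj : ∀ j j', j < n → j' < n → xv j = xv j' → xv (j + 1) = xv (j' + 1) → j = j')
    (c : ℝ≥0∞) (x : V) :
    ∑' y, (if IsEdge n xv x y then c else 0)
      = c * ((Finset.range n).filter fun j => xv j = x).card := by
  set s := ((Finset.range n).filter fun j => xv j = x).image (fun j => xv (j + 1)) with hs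
  rw [tsum_eq_sum (s := s) ?_]
  · have hmem : ∀ y ∈ s, IsEdge n xv x y := by
      intro y hy
      simp only [hs, Finset.mem_image, Finset.mem_filter, Finset.mem_range] at hy
      obtain ⟨j, ⟨hj, hxj⟩, hyj⟩ := hy
      exact ⟨j, hj, hxj, hyj⟩
    rw [Finset.sum_congr rfl (fun y hy => if_pos (hmem y hy)), Finset.sum_const,
      nsmul_eq_mul, mul_comm]
    congr 1
    rw [hs, Finset.card_image_of_injOn]
    intro j hj j' hj' he
    simp only [Finset.coe_filter, Set.mem_setOf_eq, Finset.mem_range] at hj hj'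
    exact hinj j j' hj.1 hj'.1 (hj.2.trans hj'.2.symm) he
  · intro y hy
    rw [if_neg]
    rintro ⟨j, hj, hxj, hyj⟩
    exact hy (Finset.mem_image.mpr ⟨j, Finset.mem_filter.mpr ⟨Finset.mem_range.mpr hj, hxj⟩, hyj⟩)

lemma tsum_ite_in (n : ℕ) (xv : ℕ → V)
    (hinj : ∀ j j', j < n → j' < n → xv j = xv j' → xv (j + 1) = xv (j' + 1) → j = j')
    (c : ℝ≥0∞) (x : V) :
    ∑' z, (if IsEdge n xv z x then c else 0)
      = c * ((Finset.range n).filter fun j => xv (j + 1) = x).card := by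
  set s := ((Finset.range n).filter fun j => xv (j + 1) = x).image (fun j => xv j) with hs
  rw [tsum_eq_sum (s := s) ?_]
  · have hmem : ∀ z ∈ s, IsEdge n xv z x := by
      intro z hz
      simp only [hs, Finset.mem_image, Finset.mem_filter, Finset.mem_range] at hz
      obtain ⟨j, ⟨hj, hxj⟩, hzj⟩ := hz
      exact ⟨j, hj, hzj, hxj⟩
    rw [Finset.sum_congr rfl (fun z hz => if_pos (hmem z hz)), Finset.sum_const,
      nsmul_eq_mul, mul_comm]
    congr 1
    rw [hs, Finset.card_image_of_injOn]
    intro j hj j' hj' he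
    simp only [Finset.coe_filter, Set.mem_setOf_eq, Finset.mem_range] at hj hj'
    exact hinj j j' hj.1 hj'.1 he (hj.2.trans hj'.2.symm)
  · intro z hz
    rw [if_neg]
    rintro ⟨j, hj, hzj, hxj⟩
    exact hz (Finset.mem_image.mpr ⟨j, Finset.mem_filter.mpr ⟨Finset.mem_range.mpr hj, hxj⟩, hzj⟩)

lemma flow (hcl : ∀ i, vert i (len i) = vert i 0)
    (hinj : ∀ i j j', j < len i → j' < len i →
      vert i j = vert i j' → vert i (j + 1) = vert i (j' + 1) → j = j') (x : V) :
    ∑' z, WE len vert w z x = ∑' z, WE len vert w x z := by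
  unfold WE
  rw [ENNReal.tsum_comm (f := fun z i => if IsEdge (len i) (vert i) z x then ENNReal.ofReal (w i) else 0),
    ENNReal.tsum_comm (f := fun z i => if IsEdge (len i) (vert i) x z then ENNReal.ofReal (w i) else 0)]
  refine tsum_congr fun i => ?_
  rw [tsum_ite_in (len i) (vert i) (hinj i), tsum_ite_out (len i) (vert i) (hinj i),
    count_shift (len i) (vert i) (hcl i)]

end Aux

section Aux2
variable {V : Type} {q : V → V → ℝ} {m : V → ℝ} {len : ℕ → ℕ} {vert : ℕ → ℕ → V} {w : ℕ → ℝ}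

variable (hq0 : ∀ x y, 0 ≤ q x y) (hq1 : ∀ x, ∑' y, q x y = 1) (hm : ∀ x, 0 ≤ m x)
  (hcl : ∀ i, vert i (len i) = vert i 0)
  (hqpos : ∀ i j, j < len i → 0 < q (vert i j) (vert i (j + 1)))
  (hinj : ∀ i j j', j < len i → j' < len i →
      vert i j = vert i j' → vert i (j + 1) = vert i (j' + 1) → j = j')
  (hw : ∀ i, 0 < w i)
  (hrep : ∀ x y, m x * q x y = ∑' i, if IsEdge (len i) (vert i) x y then w i else 0)

include hq0 hq1 hm hcl hqpos hinj hw hrep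

lemma prop_zero {i j : ℕ} (hj : j < len i) (h0 : m (vert i j) = 0) :
    m (vert i (j + 1)) = 0 := by
  set x := vert i j with hx
  set y := vert i (j + 1) with hy
  have hrep' := WE_toReal q m len vert w hw hrep
  have hWxy : WE len vert w x y = ⊤ := by
    by_contra hne
    have hsum := WE_summable len vert w hw hne
    have hle : w i ≤ ∑' i', (if IsEdge (len i') (vert i') x y then w i' else 0) := by
      have h2 := Summable.le_tsum hsum i (fun j' _ => by split <;> [exact (hw _).le; exact le_rfl])
      rwa [if_pos ⟨j, hj, rfl, rfl⟩] at h2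
    rw [← hrep x y, h0, zero_mul] at hle
    exact absurd hle (not_le.mpr (hw i))
  have hin : ∑' z, WE len vert w z y = ⊤ :=
    top_le_iff.mp (hWxy ▸ ENNReal.le_tsum x)
  have hout : ∑' z, WE len vert w y z = ⊤ := by
    rw [← flow len vert w hcl hinj y]; exact hin
  by_contra hmy
  have hmy' : 0 < m y := lt_of_le_of_ne (hm y) (Ne.symm hmy)
  have hfin : ∀ z, WE len vert w y z ≠ ⊤ := by
    intro z hz
    have h1 : m y * q y z = 0 := by rw [hrep' y z, hz, ENNReal.toReal_top]
    have hqz : q y z = 0 := by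
      rcases mul_eq_zero.mp h1 with h | h
      · exact absurd h hmy
      · exact h
    have hedge : ∃ i', IsEdge (len i') (vert i') y z := by
      by_contra hno
      push_neg at hno
      have : WE len vert w y z = 0 := by
        unfold WE
        rw [tsum_congr (fun i' => if_neg (hno i')), tsum_zero]
      rw [this] at hz
      exact ENNReal.zero_ne_top hz
    obtain ⟨i', j', hj', he1, he2⟩ := hedge
    have := hqpos i' j' hj'
    rw [he1, he2, hqz] at this
    exact lt_irrefl 0 this
  have hWval : ∀ z, WE len vert w y z = ENNReal.ofReal (m y * q y z) := by
    intro z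
    rw [hrep' y z, ENNReal.ofReal_toReal (hfin z)]
  have hqs : Summable (q y) := by
    by_contra hns
    have := tsum_eq_zero_of_not_summable hns
    rw [hq1 y] at this; norm_num at this
  have hfin2 : ∑' z, WE len vert w y z = ENNReal.ofReal (m y) := by
    calc ∑' z, WE len vert w y z = ∑' z, ENNReal.ofReal (m y * q y z) := tsum_congr hWval
    _ = ∑' z, ENNReal.ofReal (m y) * ENNReal.ofReal (q y z) :=
        tsum_congr fun z => ENNReal.ofReal_mul (hm y)
    _ = ENNReal.ofReal (m y) * ∑' z, ENNReal.ofReal (q y z) := ENNReal.tsum_mul_left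
    _ = ENNReal.ofReal (m y) * ENNReal.ofReal (∑' z, q y z) := by
        rw [← ENNReal.ofReal_tsum_of_nonneg (fun z => hq0 y z) hqs]
    _ = ENNReal.ofReal (m y) := by rw [hq1 y, ENNReal.ofReal_one, mul_one]
  rw [hfin2] at hout
  exact ENNReal.ofReal_ne_top hout

lemma zero_forward {i j : ℕ} (h0 : m (vert i j) = 0) :
    ∀ k, j ≤ k → k ≤ len i → m (vert i k) = 0 := by
  intro k hjk hk
  induction k with
  | zero => exact (Nat.le_zero.mp hjk) ▸ h0
  | succ k ih =>
    rcases Nat.lt_or_ge j (k + 1) with h | h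
    · exact prop_zero hq0 hq1 hm hcl hqpos hinj hw hrep
        (Nat.lt_of_succ_le hk) (ih (Nat.lt_succ_iff.mp h) (Nat.le_of_succ_le hk))
    · exact (Nat.le_antisymm hjk h) ▸ h0

lemma zero_start {i j : ℕ} (hj : j < len i) (h0 : m (vert i j) = 0) :
    m (vert i 0) = 0 := by
  have := zero_forward hq0 hq1 hm hcl hqpos hinj hw hrep h0 (len i) hj.le le_rfl
  rwa [hcl i] at this

lemma zero_from_start {i : ℕ} (h0 : m (vert i 0) = 0) :
    ∀ k, k ≤ len i → m (vert i k) = 0 := fun k hk =>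
  zero_forward hq0 hq1 hm hcl hqpos hinj hw hrep h0 k (Nat.zero_le k) hk

lemma good_repr (x y : V) :
    HasSum (fun i => if 0 < m (vert i 0) ∧ IsEdge (len i) (vert i) x y then w i else 0)
      (m x * q x y) := by
  have hrep' := WE_toReal q m len vert w hw hrep
  by_cases hex : ∃ i, 0 < m (vert i 0) ∧ IsEdge (len i) (vert i) x y
  · obtain ⟨i0, hg0, j0, hj0, hx0, hy0⟩ := hex
    have hmx : 0 < m x := by
      rcases (hm x).lt_or_eq with h | h
      · exact h
      · exfalso
        have := zero_start hq0 hq1 hm hcl hqpos hinj hw hrep hj0 (hx0 ▸ h.symm)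
        exact absurd this (ne_of_gt hg0)
    have hall : ∀ i, IsEdge (len i) (vert i) x y → 0 < m (vert i 0) := by
      rintro i ⟨j, hj, hxj, -⟩
      rcases (hm (vert i 0)).lt_or_eq with h | h
      · exact h
      · exfalso
        have := zero_from_start hq0 hq1 hm hcl hqpos hinj hw hrep h.symm j hj.le
        rw [hxj] at this
        exact absurd this (ne_of_gt hmx)
    have hfe : (fun i => if 0 < m (vert i 0) ∧ IsEdge (len i) (vert i) x y then w i else 0)
        = fun i => if IsEdge (len i) (vert i) x y then w i else 0 := by
      funext i
      by_cases hie : IsEdge (len i) (vert i) x y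
      · rw [if_pos ⟨hall i hie, hie⟩, if_pos hie]
      · rw [if_neg (fun hcon => hie hcon.2), if_neg hie]
    rw [hfe]
    have hWne : WE len vert w x y ≠ ⊤ := by
      intro htop
      have h1 : m x * q x y = 0 := by rw [hrep' x y, htop, ENNReal.toReal_top]
      have hqxy : 0 < q x y := by
        have := hqpos i0 j0 hj0; rwa [hx0, hy0] at this
      nlinarith
    have hsum := WE_summable len vert w hw hWne
    have := hsum.hasSum
    rwa [← hrep x y] at this
  · push_neg at hex
    have h0 : (fun i => if 0 < m (vert i 0) ∧ IsEdge (len i) (vert i) x y then w i else 0)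
        = fun _ => (0:ℝ) :=
      funext fun i => if_neg (fun hcon => (hex i hcon.1) hcon.2)
    rw [h0]
    have hmq : m x * q x y = 0 := by
      by_cases hie : ∃ i, IsEdge (len i) (vert i) x y
      · obtain ⟨i, j, hj, hxj, hyj⟩ := hie
        have hm0 : m (vert i 0) = 0 := by
          rcases (hm (vert i 0)).lt_or_eq with h | h
          · exact absurd ((⟨j, hj, hxj, hyj⟩ : IsEdge (len i) (vert i) x y)) (hex i h)
          · exact h.symm
        have := zero_from_start hq0 hq1 hm hcl hqpos hinj hw hrep hm0 j hj.le
        rw [hxj] at this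
        rw [this, zero_mul]
      · push_neg at hie
        have hW0 : WE len vert w x y = 0 := by
          unfold WE
          rw [tsum_congr (fun i => if_neg (hie i)), tsum_zero]
        rw [hrep' x y, hW0, ENNReal.toReal_zero]
    rw [hmq]
    exact hasSum_zero

end Aux2

section Aux3
variable {V : Type} {q : V → V → ℝ} {m : V → ℝ} {len : ℕ → ℕ} {vert : ℕ → ℕ → V} {w : ℕ → ℝ}

/-- sum of `g(x_j)(f(x_j)-f(x_{j+1}))` along cycle `i`. -/
noncomputable def cycSum (len : ℕ → ℕ) (vert : ℕ → ℕ → V) (i : ℕ) (f g : V → ℝ) : ℝ :=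
  ∑ j ∈ Finset.range (len i), g (vert i j) * (f (vert i j) - f (vert i (j + 1)))

lemma summable_of_ofReal_ne_top {ι : Type*} {h : ι → ℝ} (h0 : ∀ i, 0 ≤ h i)
    (hfin : ∑' i, ENNReal.ofReal (h i) ≠ ⊤) : Summable h := by
  have h1 : Summable (fun i => (ENNReal.ofReal (h i)).toReal) := ENNReal.summable_toReal hfin
  convert h1 using 1
  funext i; rw [ENNReal.toReal_ofReal (h0 i)]

lemma fiber_hasSum
    (hinj : ∀ i j j', j < len i → j' < len i →
      vert i j = vert i j' → vert i (j + 1) = vert i (j' + 1) → j = j')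
    (f g : V → ℝ) (i : ℕ) :
    HasSum (fun p : V × V =>
      (if 0 < m (vert i 0) ∧ IsEdge (len i) (vert i) p.1 p.2 then w i else 0) *
        (g p.1 * (f p.1 - f p.2)))
      (if 0 < m (vert i 0) then w i * cycSum len vert i f g else 0) := by
  by_cases hGW : 0 < m (vert i 0)
  · simp only [hGW, true_and, if_true]
    set s : Finset (V × V) :=
      (Finset.range (len i)).image (fun j => (vert i j, vert i (j + 1))) with hs
    have hzero : ∀ p ∉ s, (if IsEdge (len i) (vert i) p.1 p.2 then w i else 0) *
        (g p.1 * (f p.1 - f p.2)) = 0 := by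
      rintro p hp
      rw [if_neg, zero_mul]
      rintro ⟨j, hj, h1, h2⟩
      exact hp (Finset.mem_image.mpr ⟨j, Finset.mem_range.mpr hj, by rw [h1, h2]⟩)
    have hval : ∑ p ∈ s, (if IsEdge (len i) (vert i) p.1 p.2 then w i else 0) *
        (g p.1 * (f p.1 - f p.2)) = w i * cycSum len vert i f g := by
      rw [hs, Finset.sum_image, cycSum, Finset.mul_sum]
      · refine Finset.sum_congr rfl fun j hj => ?_
        rw [if_pos ⟨j, Finset.mem_range.mp hj, rfl, rfl⟩]
      · intro j hj j' hj' he
        rw [Prod.mk.injEq] at he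
        exact hinj i j j' (Finset.mem_range.mp hj) (Finset.mem_range.mp hj') he.1 he.2
    exact hval ▸ hasSum_sum_of_ne_finset_zero hzero
  · simp only [hGW, false_and, if_false, zero_mul]
    exact hasSum_zero

variable (hq0 : ∀ x y, 0 ≤ q x y) (hq1 : ∀ x, ∑' y, q x y = 1) (hm : ∀ x, 0 ≤ m x)
  (hcl : ∀ i, vert i (len i) = vert i 0)
  (hqpos : ∀ i j, j < len i → 0 < q (vert i j) (vert i (j + 1)))
  (hinj : ∀ i j j', j < len i → j' < len i →
      vert i j = vert i j' → vert i (j + 1) = vert i (j' + 1) → j = j')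
  (hw : ∀ i, 0 < w i)
  (hrep : ∀ x y, m x * q x y = ∑' i, if IsEdge (len i) (vert i) x y then w i else 0)

include hq0 hq1 hm hcl hqpos hinj hw hrep

lemma F_summable (f g : V → ℝ) (hf : (Function.support f).Finite)
    (hg : (Function.support g).Finite) :
    Summable (fun ip : ℕ × (V × V) =>
      (if 0 < m (vert ip.1 0) ∧ IsEdge (len ip.1) (vert ip.1) ip.2.1 ip.2.2 then w ip.1 else 0) *
        (g ip.2.1 * (f ip.2.1 - f ip.2.2))) := by
  set ind : ℕ → V × V → ℝ := fun i p =>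
    if 0 < m (vert i 0) ∧ IsEdge (len i) (vert i) p.1 p.2 then w i else 0 with hind
  have hind0 : ∀ i p, 0 ≤ ind i p := by
    intro i p; rw [hind]; dsimp only; split
    · exact (hw i).le
    · exact le_rfl
  apply Summable.of_abs
  apply summable_of_ofReal_ne_top (fun ip => abs_nonneg _)
  set D : V × V → ℝ≥0∞ := fun p =>
    ENNReal.ofReal (|g p.1| * |f p.1|) + ENNReal.ofReal (|g p.1| * |f p.2|) with hD
  have hbound : ∀ ip : ℕ × (V × V),
      ENNReal.ofReal |ind ip.1 ip.2 * (g ip.2.1 * (f ip.2.1 - f ip.2.2))|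
        ≤ ENNReal.ofReal (ind ip.1 ip.2) * D ip.2 := by
    rintro ⟨i, p⟩
    have h1 : |ind i p * (g p.1 * (f p.1 - f p.2))|
        ≤ ind i p * (|g p.1| * |f p.1| + |g p.1| * |f p.2|) := by
      rw [abs_mul, abs_of_nonneg (hind0 i p)]
      refine mul_le_mul_of_nonneg_left ?_ (hind0 i p)
      rw [abs_mul]
      calc |g p.1| * |f p.1 - f p.2| ≤ |g p.1| * (|f p.1| + |f p.2|) :=
            mul_le_mul_of_nonneg_left (abs_sub _ _) (abs_nonneg _)
        _ = |g p.1| * |f p.1| + |g p.1| * |f p.2| := by ring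
    calc ENNReal.ofReal |ind i p * (g p.1 * (f p.1 - f p.2))|
        ≤ ENNReal.ofReal (ind i p * (|g p.1| * |f p.1| + |g p.1| * |f p.2|)) :=
          ENNReal.ofReal_le_ofReal h1
      _ = ENNReal.ofReal (ind i p) * ENNReal.ofReal (|g p.1| * |f p.1| + |g p.1| * |f p.2|) :=
          ENNReal.ofReal_mul (hind0 i p)
      _ = ENNReal.ofReal (ind i p) * D p := by
          rw [hD]; dsimp only
          rw [ENNReal.ofReal_add (by positivity) (by positivity)]
  have hqs : ∀ x, Summable (q x) := by
    intro x
    by_contra hns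
    have := tsum_eq_zero_of_not_summable hns
    rw [hq1 x] at this; norm_num at this
  have hsum_ind : ∀ p : V × V, ∑' i, ENNReal.ofReal (ind i p)
      = ENNReal.ofReal (m p.1 * q p.1 p.2) := by
    intro p
    have hgr := good_repr hq0 hq1 hm hcl hqpos hinj hw hrep p.1 p.2
    rw [← hgr.tsum_eq, ENNReal.ofReal_tsum_of_nonneg (fun i => hind0 i p) hgr.summable]
  have main : ∑' ip : ℕ × (V × V), ENNReal.ofReal (ind ip.1 ip.2) * D ip.2 ≠ ⊤ := by
    have h2 : ∑' ip : ℕ × (V × V), ENNReal.ofReal (ind ip.1 ip.2) * D ip.2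
        = ∑' p : V × V, ENNReal.ofReal (m p.1 * q p.1 p.2) * D p := by
      rw [ENNReal.tsum_prod (f := fun i p => ENNReal.ofReal (ind i p) * D p),
        ENNReal.tsum_comm (f := fun i p => ENNReal.ofReal (ind i p) * D p)]
      refine tsum_congr fun p => ?_
      rw [ENNReal.tsum_mul_right, hsum_ind p]
    rw [h2]
    have h3 : ∀ p : V × V, ENNReal.ofReal (m p.1 * q p.1 p.2) * D p
        = ENNReal.ofReal ((m p.1 * (|g p.1| * |f p.1|)) * q p.1 p.2)
          + ENNReal.ofReal ((m p.1 * q p.1 p.2) * (|g p.1| * |f p.2|)) := by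
      intro p
      rw [hD]; dsimp only
      have hmq : 0 ≤ m p.1 * q p.1 p.2 := mul_nonneg (hm _) (hq0 _ _)
      have e1 : (m p.1 * q p.1 p.2) * (|g p.1| * |f p.1|)
          = (m p.1 * (|g p.1| * |f p.1|)) * q p.1 p.2 := by ring
      rw [mul_add, ← ENNReal.ofReal_mul hmq, ← ENNReal.ofReal_mul hmq, e1]
    rw [tsum_congr h3, ENNReal.tsum_add]
    have hA : ∑' p : V × V, ENNReal.ofReal ((m p.1 * (|g p.1| * |f p.1|)) * q p.1 p.2) ≠ ⊤ := by
      rw [ENNReal.tsum_prod (f := fun x y => ENNReal.ofReal ((m x * (|g x| * |f x|)) * q x y))]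
      have h4 : ∀ x : V, ∑' y, ENNReal.ofReal ((m x * (|g x| * |f x|)) * q x y)
          = ENNReal.ofReal (m x * (|g x| * |f x|)) := by
        intro x
        calc ∑' y, ENNReal.ofReal ((m x * (|g x| * |f x|)) * q x y)
            = ∑' y, ENNReal.ofReal (m x * (|g x| * |f x|)) * ENNReal.ofReal (q x y) :=
              tsum_congr fun y => ENNReal.ofReal_mul (mul_nonneg (hm _) (by positivity))
          _ = ENNReal.ofReal (m x * (|g x| * |f x|)) * ∑' y, ENNReal.ofReal (q x y) :=
              ENNReal.tsum_mul_left
          _ = ENNReal.ofReal (m x * (|g x| * |f x|)) := by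
              rw [← ENNReal.ofReal_tsum_of_nonneg (hq0 x) (hqs x), hq1 x,
                ENNReal.ofReal_one, mul_one]
      rw [tsum_congr h4, tsum_eq_sum (s := hg.toFinset)
        (fun x hx => by
          have : g x = 0 := by
            by_contra hgx
            exact hx (hg.mem_toFinset.mpr hgx)
          simp [this])]
      exact (ENNReal.sum_lt_top.mpr fun a _ => ENNReal.ofReal_lt_top).ne
    have hB : ∑' p : V × V, ENNReal.ofReal ((m p.1 * q p.1 p.2) * (|g p.1| * |f p.2|)) ≠ ⊤ := by
      rw [tsum_eq_sum (s := hg.toFinset ×ˢ hf.toFinset)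
        (fun p hp => by
          rw [Finset.mem_product, not_and_or] at hp
          rcases hp with hp | hp
          · have : g p.1 = 0 := by
              by_contra hgx; exact hp (hg.mem_toFinset.mpr hgx)
            simp [this]
          · have : f p.2 = 0 := by
              by_contra hfx; exact hp (hf.mem_toFinset.mpr hfx)
            simp [this])]
      exact (ENNReal.sum_lt_top.mpr fun a _ => ENNReal.ofReal_lt_top).ne
    exact ENNReal.add_ne_top.mpr ⟨hA, hB⟩
  intro htop
  exact main (top_le_iff.mp (htop ▸ ENNReal.tsum_le_tsum hbound))

end Aux3


section Aux4
variable {V : Type} {q : V → V → ℝ} {m : V → ℝ} {len : ℕ → ℕ} {vert : ℕ → ℕ → V} {w : ℕ → ℝ}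

variable (hq0 : ∀ x y, 0 ≤ q x y) (hq1 : ∀ x, ∑' y, q x y = 1) (hm : ∀ x, 0 ≤ m x)
  (hcl : ∀ i, vert i (len i) = vert i 0)
  (hqpos : ∀ i j, j < len i → 0 < q (vert i j) (vert i (j + 1)))
  (hinj : ∀ i j j', j < len i → j' < len i →
      vert i j = vert i j' → vert i (j + 1) = vert i (j' + 1) → j = j')
  (hw : ∀ i, 0 < w i)
  (hrep : ∀ x y, m x * q x y = ∑' i, if IsEdge (len i) (vert i) x y then w i else 0)

include hq0 hq1 hm hcl hqpos hinj hw hrep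

lemma decomp (f g : V → ℝ) (hf : (Function.support f).Finite)
    (hg : (Function.support g).Finite) :
    HasSum (fun i => if 0 < m (vert i 0) then w i * cycSum len vert i f g else 0)
      (dirichlet q m f g) := by
  set F : ℕ × (V × V) → ℝ := fun ip =>
    (if 0 < m (vert ip.1 0) ∧ IsEdge (len ip.1) (vert ip.1) ip.2.1 ip.2.2 then w ip.1 else 0) *
      (g ip.2.1 * (f ip.2.1 - f ip.2.2)) with hF
  have hFs : Summable F := F_summable hq0 hq1 hm hcl hqpos hinj hw hrep f g hf hg
  have hfib : ∀ i, HasSum (fun p => F (i, p))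
      (if 0 < m (vert i 0) then w i * cycSum len vert i f g else 0) :=
    fun i => fiber_hasSum hinj f g i
  have h1 : HasSum (fun i => if 0 < m (vert i 0) then w i * cycSum len vert i f g else 0)
      (∑' ip, F ip) := HasSum.prod_fiberwise hFs.hasSum hfib
  suffices hdd : dirichlet q m f g = ∑' ip, F ip by rw [hdd]; exact h1
  unfold dirichlet
  have hterm : ∀ p : V × V, m p.1 * q p.1 p.2 * g p.1 * (f p.1 - f p.2) = ∑' i, F (i, p) := by
    intro p
    have hgr := (good_repr hq0 hq1 hm hcl hqpos hinj hw hrep p.1 p.2).tsum_eq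
    calc m p.1 * q p.1 p.2 * g p.1 * (f p.1 - f p.2)
        = (m p.1 * q p.1 p.2) * (g p.1 * (f p.1 - f p.2)) := by ring
      _ = (∑' i, if 0 < m (vert i 0) ∧ IsEdge (len i) (vert i) p.1 p.2 then w i else 0) *
            (g p.1 * (f p.1 - f p.2)) := by rw [hgr]
      _ = ∑' i, F (i, p) := (tsum_mul_right).symm
  rw [tsum_congr hterm]
  have hFe : Summable (F ∘ (Equiv.prodComm (V × V) ℕ)) :=
    (Equiv.summable_iff (Equiv.prodComm (V × V) ℕ)).mpr hFs
  rw [← Equiv.tsum_eq (Equiv.prodComm (V × V) ℕ) F]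
  exact (Summable.tsum_prod' hFe (fun p => hFe.prod_factor p)).symm

end Aux4

lemma cyc_selfsum (n : ℕ) (a : ℕ → ℝ) (ha : a n = a 0) :
    ∑ j ∈ Finset.range n, (a j - a (j + 1)) ^ 2
      = 2 * ∑ j ∈ Finset.range n, a j * (a j - a (j + 1)) := by
  have h1 : ∑ j ∈ Finset.range n, (a j ^ 2 - a (j + 1) ^ 2) = a 0 ^ 2 - a n ^ 2 :=
    Finset.sum_range_sub' (fun j => a j ^ 2) n
  have h2 : ∑ j ∈ Finset.range n, (a j - a (j + 1)) ^ 2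
      = ∑ j ∈ Finset.range n, (2 * (a j * (a j - a (j + 1))) - (a j ^ 2 - a (j + 1) ^ 2)) :=
    Finset.sum_congr rfl (fun j _ => by ring)
  rw [h2, Finset.sum_sub_distrib, h1, ha, ← Finset.mul_sum]
  ring

lemma cyc_selfsum_nonneg (n : ℕ) (a : ℕ → ℝ) (ha : a n = a 0) :
    0 ≤ ∑ j ∈ Finset.range n, a j * (a j - a (j + 1)) := by
  have := cyc_selfsum n a ha
  have h0 : 0 ≤ ∑ j ∈ Finset.range n, (a j - a (j + 1)) ^ 2 :=
    Finset.sum_nonneg fun j _ => sq_nonneg _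
  linarith

lemma cyc_cs (n : ℕ) (a b : ℕ → ℝ) (ha : a n = a 0) (hb : b n = b 0) :
    (∑ j ∈ Finset.range n, b j * (a j - a (j + 1))) ^ 2
      ≤ 4 * (n : ℝ) ^ 2 * ((∑ j ∈ Finset.range n, a j * (a j - a (j + 1)))
          * (∑ j ∈ Finset.range n, b j * (b j - b (j + 1)))) := by
  have hB : ∑ j ∈ Finset.range n, (a j - a (j + 1)) ^ 2
      = 2 * ∑ j ∈ Finset.range n, a j * (a j - a (j + 1)) := cyc_selfsum n a ha
  have hC : ∑ j ∈ Finset.range n, (b j - b (j + 1)) ^ 2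
      = 2 * ∑ j ∈ Finset.range n, b j * (b j - b (j + 1)) := cyc_selfsum n b hb
  have hDa0 : ∑ j ∈ Finset.range n, (a j - a (j + 1)) = 0 := by
    rw [Finset.sum_range_sub' a n, ha, sub_self]
  have h3 : ∑ j ∈ Finset.range n, b j * (a j - a (j + 1))
      = ∑ j ∈ Finset.range n, (b j - b 0) * (a j - a (j + 1)) := by
    have : ∑ j ∈ Finset.range n, (b j - b 0) * (a j - a (j + 1))
        = ∑ j ∈ Finset.range n, b j * (a j - a (j + 1))
          - b 0 * ∑ j ∈ Finset.range n, (a j - a (j + 1)) := by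
      rw [Finset.mul_sum, ← Finset.sum_sub_distrib]
      exact Finset.sum_congr rfl fun j _ => by ring
    rw [this, hDa0, mul_zero, sub_zero]
  have h4 : ∀ j ∈ Finset.range n, (b j - b 0) ^ 2
      ≤ (n : ℝ) * ∑ k ∈ Finset.range n, (b k - b (k + 1)) ^ 2 := by
    intro j hj
    have hjn := Finset.mem_range.mp hj
    have htel : ∑ k ∈ Finset.range j, (b k - b (k + 1)) = b 0 - b j :=
      Finset.sum_range_sub' b j
    have hcs := Finset.sum_mul_sq_le_sq_mul_sq (Finset.range j) (fun _ => (1 : ℝ))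
      (fun k => b k - b (k + 1))
    simp only [one_mul, one_pow, Finset.sum_const, Finset.card_range, nsmul_eq_mul,
      mul_one] at hcs
    rw [htel] at hcs
    have hmono : ∑ k ∈ Finset.range j, (b k - b (k + 1)) ^ 2
        ≤ ∑ k ∈ Finset.range n, (b k - b (k + 1)) ^ 2 :=
      Finset.sum_le_sum_of_subset_of_nonneg
        (Finset.range_subset_range.mpr hjn.le) (fun k _ _ => sq_nonneg _)
    have h5 : (b 0 - b j) ^ 2 ≤ (j : ℝ) * ∑ k ∈ Finset.range n, (b k - b (k + 1)) ^ 2 :=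
      hcs.trans (mul_le_mul_of_nonneg_left hmono (Nat.cast_nonneg j))
    have h6 : (j : ℝ) * ∑ k ∈ Finset.range n, (b k - b (k + 1)) ^ 2
        ≤ (n : ℝ) * ∑ k ∈ Finset.range n, (b k - b (k + 1)) ^ 2 :=
      mul_le_mul_of_nonneg_right (by exact_mod_cast hjn.le)
        (Finset.sum_nonneg fun k _ => sq_nonneg _)
    calc (b j - b 0) ^ 2 = (b 0 - b j) ^ 2 := by ring
      _ ≤ _ := h5.trans h6
  have h5 : ∑ j ∈ Finset.range n, (b j - b 0) ^ 2
      ≤ (n : ℝ) ^ 2 * ∑ k ∈ Finset.range n, (b k - b (k + 1)) ^ 2 := by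
    calc ∑ j ∈ Finset.range n, (b j - b 0) ^ 2
        ≤ ∑ _j ∈ Finset.range n, (n : ℝ) * ∑ k ∈ Finset.range n, (b k - b (k + 1)) ^ 2 :=
          Finset.sum_le_sum h4
      _ = (n : ℝ) ^ 2 * ∑ k ∈ Finset.range n, (b k - b (k + 1)) ^ 2 := by
          rw [Finset.sum_const, Finset.card_range, nsmul_eq_mul]; ring
  have hcs2 := Finset.sum_mul_sq_le_sq_mul_sq (Finset.range n)
    (fun j => b j - b 0) (fun j => a j - a (j + 1))
  rw [h3]
  have hDa2 : (0 : ℝ) ≤ ∑ j ∈ Finset.range n, (a j - a (j + 1)) ^ 2 :=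
    Finset.sum_nonneg fun j _ => sq_nonneg _
  calc (∑ j ∈ Finset.range n, (b j - b 0) * (a j - a (j + 1))) ^ 2
      ≤ (∑ j ∈ Finset.range n, (b j - b 0) ^ 2) * ∑ j ∈ Finset.range n, (a j - a (j + 1)) ^ 2 :=
        hcs2
    _ ≤ ((n : ℝ) ^ 2 * ∑ k ∈ Finset.range n, (b k - b (k + 1)) ^ 2)
          * ∑ j ∈ Finset.range n, (a j - a (j + 1)) ^ 2 :=
        mul_le_mul_of_nonneg_right h5 hDa2
    _ = 4 * (n : ℝ) ^ 2 * ((∑ j ∈ Finset.range n, a j * (a j - a (j + 1)))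
          * (∑ j ∈ Finset.range n, b j * (b j - b (j + 1)))) := by
        rw [hB, hC]; ring

set_option maxHeartbeats 1000000 in
/-- sector condition. For every cycle-length bound `C0` there is a constant
`M` (depending only on `C0`) such that for every centered graph whose cycles have length
at most `C0` and all finitely supported `f, g`: `E(f,g)² ≤ M² E(f,f) E(g,g)`. -/
theorem sector_condition (C0 : ℕ) :
    ∃ M : ℝ, ∀ (V : Type) (q : V → V → ℝ) (m : V → ℝ)
      (len : ℕ → ℕ) (vert : ℕ → ℕ → V) (w : ℕ → ℝ),
      (∀ x y, 0 ≤ q x y) → (∀ x, ∑' y, q x y = 1) → (∀ x, 0 ≤ m x) →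
      Centered q m len vert w C0 →
      ∀ f g : V → ℝ, (Function.support f).Finite → (Function.support g).Finite →
        (dirichlet q m f g) ^ 2 ≤ M ^ 2 * (dirichlet q m f f * dirichlet q m g g) := by
  refine ⟨2 * (C0 : ℝ), ?_⟩
  intro V q m len vert w hq0 hq1 hm hc f g hf hg
  obtain ⟨hlen, hcl, hqpos, hinj, hw, hrep⟩ := hc
  set K : ℝ := (C0 : ℝ) with hK
  have hK1 : 1 ≤ K := by
    have h1 := (hlen 0).1
    have h2 := (hlen 0).2
    have h3 : 1 ≤ C0 := h1.trans h2
    rw [hK]; exact_mod_cast h3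
  have hKpos : 0 < K := lt_of_lt_of_le one_pos hK1
  have hdfg := decomp hq0 hq1 hm hcl hqpos hinj hw hrep f g hf hg
  have hdff := decomp hq0 hq1 hm hcl hqpos hinj hw hrep f f hf hf
  have hdgg := decomp hq0 hq1 hm hcl hqpos hinj hw hrep g g hg hg
  set σfg : ℕ → ℝ := fun i => if 0 < m (vert i 0) then w i * cycSum len vert i f g else 0
    with hσfg
  set σff : ℕ → ℝ := fun i => if 0 < m (vert i 0) then w i * cycSum len vert i f f else 0
    with hσff
  set σgg : ℕ → ℝ := fun i => if 0 < m (vert i 0) then w i * cycSum len vert i g g else 0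
    with hσgg
  have hff_nonneg : ∀ i, 0 ≤ σff i := by
    intro i
    rw [hσff]; dsimp only
    split
    · exact mul_nonneg (hw i).le
        (cyc_selfsum_nonneg (len i) (fun j => f (vert i j)) (congrArg f (hcl i)))
    · exact le_rfl
  have hgg_nonneg : ∀ i, 0 ≤ σgg i := by
    intro i
    rw [hσgg]; dsimp only
    split
    · exact mul_nonneg (hw i).le
        (cyc_selfsum_nonneg (len i) (fun j => g (vert i j)) (congrArg g (hcl i)))
    · exact le_rfl
  set a : ℝ := dirichlet q m f f with haa
  set b : ℝ := dirichlet q m g g with hbb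
  set c : ℝ := |dirichlet q m f g| with hcc
  have ha0 : 0 ≤ a := by
    rw [← hdff.tsum_eq]
    exact tsum_nonneg hff_nonneg
  have hb0 : 0 ≤ b := by
    rw [← hdgg.tsum_eq]
    exact tsum_nonneg hgg_nonneg
  have hc0 : 0 ≤ c := abs_nonneg _
  have hfinal : (dirichlet q m f g) ^ 2 = c ^ 2 := (sq_abs _).symm
  clear_value a b c
  -- pointwise estimate
  have hpt : ∀ t : ℝ, 0 < t → ∀ i, |σfg i| * t ≤ K * (t ^ 2 * σff i + σgg i) := by
    intro t ht i
    rw [hσfg, hσff, hσgg]; dsimp only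
    by_cases hGW : 0 < m (vert i 0)
    · simp only [hGW, if_true]
      set Sfg := cycSum len vert i f g with hSfg
      set Sff := cycSum len vert i f f with hSff
      set Sgg := cycSum len vert i g g with hSgg
      have hffn : 0 ≤ Sff :=
        cyc_selfsum_nonneg (len i) (fun j => f (vert i j)) (congrArg f (hcl i))
      have hggn : 0 ≤ Sgg :=
        cyc_selfsum_nonneg (len i) (fun j => g (vert i j)) (congrArg g (hcl i))
      have hcs : Sfg ^ 2 ≤ 4 * ((len i : ℝ)) ^ 2 * (Sff * Sgg) :=
        cyc_cs (len i) (fun j => f (vert i j)) (fun j => g (vert i j))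
          (congrArg f (hcl i)) (congrArg g (hcl i))
      have hnK : ((len i : ℝ)) ^ 2 ≤ K ^ 2 := by
        have h1 : ((len i : ℝ)) ≤ K := by rw [hK]; exact_mod_cast (hlen i).2
        have h2 : (0 : ℝ) ≤ (len i : ℝ) := Nat.cast_nonneg _
        nlinarith
      have hcs2 : Sfg ^ 2 ≤ 4 * K ^ 2 * (Sff * Sgg) := by
        have hprod : 0 ≤ Sff * Sgg := mul_nonneg hffn hggn
        nlinarith
      have hRHS0 : 0 ≤ K * (t ^ 2 * Sff + Sgg) := by positivity
      have hXle : |Sfg| * t ≤ K * (t ^ 2 * Sff + Sgg) := by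
        have hsq : (|Sfg| * t) ^ 2 ≤ (K * (t ^ 2 * Sff + Sgg)) ^ 2 := by
          have h1 : (|Sfg| * t) ^ 2 = t ^ 2 * Sfg ^ 2 := by
            rw [mul_pow, sq_abs]; ring
          nlinarith [sq_nonneg (t ^ 2 * Sff - Sgg), sq_nonneg t, mul_nonneg hffn hggn,
            mul_nonneg (mul_nonneg hffn hggn) (sq_nonneg t)]
        nlinarith [abs_nonneg Sfg, mul_nonneg (abs_nonneg Sfg) ht.le, hRHS0]
      calc |w i * Sfg| * t = w i * (|Sfg| * t) := by
            rw [abs_mul, abs_of_pos (hw i)]; ring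
        _ ≤ w i * (K * (t ^ 2 * Sff + Sgg)) :=
            mul_le_mul_of_nonneg_left hXle (hw i).le
        _ = K * (t ^ 2 * (w i * Sff) + w i * Sgg) := by ring
    · simp only [hGW, if_false]
      have hK0 : (0:ℝ) ≤ K := hKpos.le
      have ht2 : (0:ℝ) ≤ t ^ 2 := sq_nonneg t
      simp only [abs_zero, zero_mul, mul_zero, add_zero]
      positivity
  -- summables
  have hsfg : Summable σfg := hdfg.summable
  have hsff : Summable σff := hdff.summable
  have hsgg : Summable σgg := hdgg.summable
  clear_value σfg σff σgg K
  -- global estimate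
  have hglob : ∀ t : ℝ, 0 < t → c * t ≤ K * (t ^ 2 * a + b) := by
    intro t ht
    have h1 : c ≤ ∑' i, |σfg i| := by
      rw [hcc, ← hdfg.tsum_eq]
      have := norm_tsum_le_tsum_norm (f := σfg) (by simpa [Real.norm_eq_abs] using hsfg.abs)
      simpa [Real.norm_eq_abs] using this
    have h2 : c * t ≤ (∑' i, |σfg i|) * t := mul_le_mul_of_nonneg_right h1 ht.le
    have h3 : (∑' i, |σfg i|) * t = ∑' i, |σfg i| * t := (tsum_mul_right).symm
    have h4 : ∑' i, |σfg i| * t ≤ ∑' i, K * (t ^ 2 * σff i + σgg i) := by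
      refine Summable.tsum_le_tsum (fun i => hpt t ht i) (hsfg.abs.mul_right t) ?_
      exact (((hsff.mul_left (t ^ 2)).add hsgg).mul_left K)
    have h5 : ∑' i, K * (t ^ 2 * σff i + σgg i) = K * (t ^ 2 * a + b) := by
      rw [tsum_mul_left, Summable.tsum_add (hsff.mul_left (t ^ 2)) hsgg, tsum_mul_left,
        hdff.tsum_eq, hdgg.tsum_eq]
    calc c * t ≤ (∑' i, |σfg i|) * t := h2
      _ = ∑' i, |σfg i| * t := h3
      _ ≤ ∑' i, K * (t ^ 2 * σff i + σgg i) := h4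
      _ = K * (t ^ 2 * a + b) := h5
  -- conclude
  have hgoal : c ^ 2 ≤ (2 * K) ^ 2 * (a * b) := by
    rcases eq_or_lt_of_le hc0 with hez | hcpos
    · rw [← hez]
      have h0 : (0:ℝ) ≤ (2 * K) ^ 2 * (a * b) :=
        mul_nonneg (sq_nonneg _) (mul_nonneg ha0 hb0)
      simpa using h0
    · by_cases haz : a = 0
      · exfalso
        have htpos : 0 < (K * b + 1) / c := by positivity
        have hkey := hglob ((K * b + 1) / c) htpos
        rw [haz] at hkey
        have hctc : c * ((K * b + 1) / c) = K * b + 1 := by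
          field_simp [hcpos.ne']
        rw [hctc] at hkey
        nlinarith [sq_nonneg ((K * b + 1) / c), hKpos, hb0]
      · have hap : 0 < a := lt_of_le_of_ne ha0 (Ne.symm haz)
        have hden : 0 < 2 * K * a := by positivity
        set t := c / (2 * K * a) with htdef
        have htpos : 0 < t := div_pos hcpos hden
        have ht1 : t * (2 * K * a) = c := div_mul_cancel₀ c hden.ne'
        have hkey := hglob t htpos
        clear_value t
        have h7 : K * a * t ^ 2 ≤ K * b := by nlinarith [hkey, ht1]
        have h8 : a * t ^ 2 ≤ b := by
          have := (mul_le_mul_iff_right₀ hKpos).mp (by linarith : K * (a * t ^ 2) ≤ K * b)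
          linarith
        have h9 : c ^ 2 = 4 * K ^ 2 * a * (a * t ^ 2) := by
          rw [← ht1]; ring
        calc c ^ 2 = 4 * K ^ 2 * a * (a * t ^ 2) := h9
          _ ≤ 4 * K ^ 2 * a * b := by
              refine mul_le_mul_of_nonneg_left h8 ?_
              positivity
          _ = (2 * K) ^ 2 * (a * b) := by ring
  rw [hfinal]
  exact hgoal
end

section
/- Suppose Γ = (V,q) is centered for m with inf_x m(x) > 0, and the Carne–Varopoulos bound holds: P[X_t = y | X_0 = x] ≤ C·e^{-d(x,y)²/(Ct)} for all x,y,t. If the balls have subexponential volume growth, i.e., (1/t)·log V(t) → 0 where V(t) = #{x : d(o,x) ≤ t}, then for every α > 0, P[d(o,X_t) ≥ αt | X_0 = o] → 0 as t → ∞. -/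
open scoped Classical

/-- rate of escape. If the transition probabilities `μ t x = P[X_t = x | X_0 = o]`
satisfy the Carne–Varopoulos bound `μ t x ≤ C exp(-d(o,x)²/(Ct))`, the chain makes
nearest-neighbour steps (`μ t x ≠ 0 → d(o,x) ≤ t`), and the balls have subexponential
volume growth, then `P[d(o,X_t) ≥ α t] → 0` for every `α > 0`. -/
theorem escape_rate_subexponential_growth {V : Type*}
    (d : V → V → ℕ) (o : V) (μ : ℕ → V → ℝ) (C : ℝ) (hC : 0 < C)
    (hμpos : ∀ t x, 0 ≤ μ t x)
    (hprob : ∀ t, ∑' x : V, μ t x = 1)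
    (hsupp : ∀ t x, μ t x ≠ 0 → d o x ≤ t)
    (hCV : ∀ (t : ℕ) (x : V), 1 ≤ t →
      μ t x ≤ C * Real.exp (-((d o x : ℝ)) ^ 2 / (C * t)))
    (hball : ∀ t : ℕ, {x : V | d o x ≤ t}.Finite)
    (hgrowth : Filter.Tendsto
      (fun t : ℕ => Real.log (Nat.card {x : V | d o x ≤ t}) / t)
      Filter.atTop (nhds 0))
    (α : ℝ) (hα : 0 < α) :
    Filter.Tendsto
      (fun t : ℕ => ∑' x : V, if α * t ≤ (d o x : ℝ) then μ t x else 0)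
      Filter.atTop (nhds 0) := by
  set N : ℕ → ℕ := fun t => Nat.card {x : V | d o x ≤ t} with hN
  set f : ℕ → V → ℝ := fun t x => if α * t ≤ (d o x : ℝ) then μ t x else 0 with hf
  set g : ℕ → ℝ := fun t => Real.exp (Real.log (N t) + Real.log C - α ^ 2 * t / C)
    with hg
  -- cardinality of the ball as a Finset card
  have hcard : ∀ t, N t = (hball t).toFinset.card := by
    intro t
    show Nat.card {x : V | d o x ≤ t} = _
    rw [Nat.card_coe_set_eq, Set.ncard_eq_toFinset_card _ (hball t)]
  obtain ⟨x0, hx0⟩ : ∃ x, μ 0 x ≠ 0 := by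
    by_contra h
    push_neg at h
    have := hprob 0
    simp [h] at this
  have hx0d : d o x0 = 0 := Nat.le_zero.mp (hsupp 0 x0 hx0)
  have hNpos : ∀ t, 1 ≤ N t := by
    intro t
    rw [hcard]
    refine Finset.card_pos.mpr ⟨x0, ?_⟩
    simp [Set.Finite.mem_toFinset, hx0d]
  -- the tsum equals a finite sum over the ball
  have htsum : ∀ t, ∑' x, f t x = ∑ x ∈ (hball t).toFinset, f t x := by
    intro t
    refine tsum_eq_sum ?_
    intro x hx
    simp only [Set.Finite.mem_toFinset, Set.mem_setOf_eq, not_le] at hx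
    by_cases hμ : μ t x = 0
    · simp [hf, hμ]
    · exact absurd (hsupp t x hμ) (by omega)
  -- the key bound for t ≥ 1
  have hbound : ∀ t : ℕ, 1 ≤ t → ∑' x, f t x ≤ g t := by
    intro t ht
    rw [htsum]
    have htpos : (0 : ℝ) < t := by exact_mod_cast ht
    have hterm : ∀ x ∈ (hball t).toFinset,
        f t x ≤ C * Real.exp (-(α ^ 2 * t / C)) := by
      intro x _
      have hE : 0 < C * Real.exp (-(α ^ 2 * t / C)) :=
        mul_pos hC (Real.exp_pos _)
      simp only [hf]
      split_ifs with h
      · refine (hCV t x ht).trans ?_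
        refine mul_le_mul_of_nonneg_left ?_ hC.le
        apply Real.exp_le_exp.mpr
        rw [neg_div, neg_le_neg_iff]
        have h1 : (α * t) ^ 2 ≤ ((d o x : ℝ)) ^ 2 := by
          apply pow_le_pow_left₀ (by positivity) h
        calc α ^ 2 * t / C = (α * t) ^ 2 / (C * t) := by
              field_simp
          _ ≤ ((d o x : ℝ)) ^ 2 / (C * t) :=
              div_le_div_of_nonneg_right h1 (by positivity) |>.trans_eq rfl
      · exact hE.le
    calc ∑ x ∈ (hball t).toFinset, f t x
        ≤ ∑ _x ∈ (hball t).toFinset, C * Real.exp (-(α ^ 2 * t / C)) :=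
          Finset.sum_le_sum hterm
      _ = (N t : ℝ) * (C * Real.exp (-(α ^ 2 * t / C))) := by
          rw [Finset.sum_const, hcard t, nsmul_eq_mul]
      _ = g t := by
          have hNpos' : (0 : ℝ) < (N t : ℝ) := by exact_mod_cast hNpos t
          rw [hg]
          simp only []
          rw [Real.exp_sub, Real.exp_add, Real.exp_log hNpos', Real.exp_log hC,
            Real.exp_neg, div_eq_mul_inv]
          ring
  -- g tends to 0
  have hgto : Filter.Tendsto g Filter.atTop (nhds 0) := by
    have hlin : Filter.Tendsto
        (fun t : ℕ => Real.log (N t) + Real.log C - α ^ 2 * t / C)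
        Filter.atTop Filter.atBot := by
      have h1 : Filter.Tendsto
          (fun t : ℕ => (t : ℝ) * (Real.log (N t) / t - α ^ 2 / C))
          Filter.atTop Filter.atBot := by
        apply Filter.Tendsto.atTop_mul_neg (C := -(α ^ 2 / C))
        · simp only [neg_lt_zero]; positivity
        · exact tendsto_natCast_atTop_atTop
        · have := hgrowth.sub_const (α ^ 2 / C)
          rw [zero_sub] at this
          exact this
      have h2 : Filter.Tendsto
          (fun t : ℕ => (t : ℝ) * (Real.log (N t) / t - α ^ 2 / C) + Real.log C)
          Filter.atTop Filter.atBot := Filter.tendsto_atBot_add_const_right _ _ h1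
      refine h2.congr' ?_
      filter_upwards [Filter.eventually_ge_atTop 1] with t ht
      have htpos : (0 : ℝ) < t := by exact_mod_cast ht
      field_simp
      ring
    exact Real.tendsto_exp_atBot.comp hlin
  -- squeeze
  apply tendsto_of_tendsto_of_tendsto_of_le_of_le' tendsto_const_nhds hgto
  · filter_upwards with t
    refine tsum_nonneg fun x => ?_
    split_ifs with h
    · exact hμpos t x
    · exact le_rfl
  · filter_upwards [Filter.eventually_ge_atTop 1] with t ht
    exact hbound t ht
end

section
/- Let V be a group generated (as a semigroup) by the finite sequence G = (g_1,...,g_K), and let μ be the uniform measure on G, defining the random walk with q(x,y) = (1/K)·#{i : g_i = x⁻¹y}. If there exist n ∈ ℕ* and an n-to-1 map σ : {1,...,nK} → {1,...,K} with g_{σ(1)}·g_{σ(2)}···g_{σ(nK)} = id, then the graph Γ = (V,q) is centered for the counting measure: there exist generalized cycles (γ_x)_{x∈V} of length nK and weights such that q(a,b) = Σ_x (1/(nK))·N((a,b), γ_x), where N((a,b),γ) counts occurrences of the edge (a,b) in γ. -/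
open scoped Classical

/-- Partial products `g̃ j = g_{σ(1)} ⋯ g_{σ(j)}` along the relation `σ`. -/
noncomputable def partialProd {V : Type*} [Group V] {K nK : ℕ}
    (G : Fin K → V) (σ : Fin nK → Fin K) (j : ℕ) : V :=
  ((List.ofFn fun t => G (σ t)).take j).prod

/-- Proposition 3.1: if `G = (g_1, ..., g_K)` generates `V` as a semigroup
and there are `n ≥ 1` and an `n`-to-1 map `σ` with `g_{σ(1)} ⋯ g_{σ(nK)} = id`, then the
random walk with kernel `q(a,b) = #{i : g_i = a⁻¹ b}/K` is centered for the counting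
measure: `q(a,b) = ∑_{x ∈ V} (1/(nK)) · N((a,b), γ_x)`, where `γ_x` is the translate by
`x` of the generalized cycle of partial products, and `N(e,γ)` is the multiplicity of the
edge `e` in `γ`. -/
theorem random_walk_centered_of_C1 {V : Type*} [Group V]
    (K n : ℕ) (hK : 1 ≤ K) (hn : 1 ≤ n)
    (G : Fin K → V)
    (hgen : ∀ x : V, x ∈ Subsemigroup.closure (Set.range G))
    (σ : Fin (n * K) → Fin K)
    (hσ : ∀ i : Fin K, (Finset.univ.filter fun j => σ j = i).card = n)
    (hprod : (List.ofFn fun j => G (σ j)).prod = 1) :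
    ∀ a b : V,
      ((Finset.univ.filter fun i : Fin K => G i = a⁻¹ * b).card : ℝ) / K =
        ∑' x : V, (1 / ((n : ℝ) * K)) *
          (((Finset.range (n * K)).filter fun j =>
              x * partialProd G σ j = a ∧ x * partialProd G σ (j + 1) = b).card : ℝ) := by
  intro a b
  have hstep : ∀ (j : ℕ) (h : j < n * K),
      partialProd G σ (j+1) = partialProd G σ j * G (σ ⟨j, h⟩) := by
    intro j h
    unfold partialProd
    rw [List.prod_take_succ _ j (by simpa using h)]
    simp
  set f : ℕ → V → ℝ := fun j x =>
    if h : j < n * K then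
      (if x = a * (partialProd G σ j)⁻¹ ∧ G (σ ⟨j, h⟩) = a⁻¹ * b
        then 1 / ((n : ℝ) * K) else 0)
    else 0 with hf
  set T : ℕ → ℝ := fun j =>
    if h : j < n * K then
      (if G (σ ⟨j, h⟩) = a⁻¹ * b then 1 / ((n : ℝ) * K) else 0)
    else 0 with hT
  have hfun : ∀ x : V,
      (1 / ((n : ℝ) * K)) *
        (((Finset.range (n * K)).filter fun j =>
            x * partialProd G σ j = a ∧ x * partialProd G σ (j + 1) = b).card : ℝ)
      = ∑ j ∈ Finset.range (n * K), f j x := by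
    intro x
    rw [Finset.card_filter]
    push_cast
    rw [Finset.mul_sum]
    refine Finset.sum_congr rfl fun j hj => ?_
    have h : j < n * K := Finset.mem_range.mp hj
    simp only [hf, dif_pos h, mul_ite, mul_one, mul_zero]
    congr 1
    have heq : (x * partialProd G σ j = a ∧ x * partialProd G σ (j + 1) = b) ↔
        (x = a * (partialProd G σ j)⁻¹ ∧ G (σ ⟨j, h⟩) = a⁻¹ * b) := by
      rw [hstep j h]
      constructor
      · rintro ⟨h1, h2⟩
        constructor
        · rw [← h1]; group
        · rw [← h1, ← h2]; group
      · rintro ⟨h1, h2⟩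
        subst h1
        constructor
        · group
        · rw [← mul_assoc, h2]; group
    simp [heq]
  have hsummable : ∀ j ∈ Finset.range (n * K), Summable (f j) := by
    intro j hj
    have h : j < n * K := Finset.mem_range.mp hj
    apply summable_of_ne_finset_zero (s := {a * (partialProd G σ j)⁻¹})
    intro x hx
    simp only [Finset.mem_singleton] at hx
    simp [hf, dif_pos h, hx]
  have hts : ∀ j ∈ Finset.range (n * K), ∑' x : V, f j x = T j := by
    intro j hj
    have h : j < n * K := Finset.mem_range.mp hj
    rw [tsum_eq_single (a * (partialProd G σ j)⁻¹)]
    · simp [hf, hT, dif_pos h]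
    · intro x hx
      simp [hf, dif_pos h, hx]
  have hcount : ((Finset.univ.filter fun i : Fin (n*K) => G (σ i) = a⁻¹ * b).card : ℝ)
      = n * ((Finset.univ.filter fun i : Fin K => G i = a⁻¹ * b).card : ℝ) := by
    rw [Finset.card_eq_sum_card_fiberwise
      (f := σ) (t := Finset.univ.filter fun i : Fin K => G i = a⁻¹ * b)
      (fun j hj => by
        simp only [Finset.mem_coe, Finset.mem_filter, Finset.mem_univ, true_and] at hj ⊢
        exact hj)]
    have : ∀ i ∈ (Finset.univ.filter fun i : Fin K => G i = a⁻¹ * b),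
        ((Finset.univ.filter fun j : Fin (n*K) => G (σ j) = a⁻¹ * b).filter
          fun j => σ j = i).card = n := by
      intro i hi
      simp only [Finset.mem_filter, Finset.mem_univ, true_and] at hi
      rw [Finset.filter_filter]
      have hset : (Finset.univ.filter fun j : Fin (n*K) => G (σ j) = a⁻¹ * b ∧ σ j = i)
          = Finset.univ.filter fun j : Fin (n*K) => σ j = i := by
        apply Finset.filter_congr
        intro j _
        constructor
        · rintro ⟨_, h2⟩; exact h2
        · rintro h2; exact ⟨h2 ▸ hi, h2⟩
      rw [hset, hσ i]
    rw [Finset.sum_congr rfl this, Finset.sum_const, smul_eq_mul]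
    push_cast
    ring
  calc ((Finset.univ.filter fun i : Fin K => G i = a⁻¹ * b).card : ℝ) / K
      = ∑ j ∈ Finset.range (n * K), ∑' x : V, f j x := by
        rw [Finset.sum_congr rfl hts]
        rw [← Fin.sum_univ_eq_sum_range T]
        have hTi : ∀ i : Fin (n * K), T i =
            (if G (σ i) = a⁻¹ * b then 1 / ((n : ℝ) * K) else 0) := by
          intro i
          simp [hT, dif_pos i.isLt]
        rw [Finset.sum_congr rfl fun i _ => hTi i]
        rw [Finset.sum_ite, Finset.sum_const, Finset.sum_const_zero, add_zero,
          nsmul_eq_mul]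
        rw [hcount]
        have hn0 : (n : ℝ) ≠ 0 := by positivity
        have hK0 : (K : ℝ) ≠ 0 := by positivity
        field_simp
    _ = ∑' x : V, (1 / ((n : ℝ) * K)) *
          (((Finset.range (n * K)).filter fun j =>
              x * partialProd G σ j = a ∧ x * partialProd G σ (j + 1) = b).card : ℝ) := by
        rw [← Summable.tsum_finsetSum hsummable]
        exact (tsum_congr hfun).symm
end

section
/- Vanishing entropy and Carne–Varopoulos bound imply zero speed: let (X_t) be a random walk on a finitely generated group V with step distribution μ of finite support, word metric d, and suppose there is a constant C with μ^t(x) ≤ C·e^{-d(id,x)²/(Ct)} for all x ∈ V, t ≥ 1. If the entropy h = lim_t -(1/t)·Σ_x μ^t(x) log μ^t(x) equals 0, then for every α > 0, P[d(id, X_t) ≥ αt] → 0 as t → ∞ (the speed L = lim (1/t)d(id,X_t) is 0). -/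
open scoped Classical

/-- `t`-th convolution power of a probability measure `μ` on a group `V`
(the law of the random walk `X_t` started at the identity). -/
noncomputable def convPow {V : Type*} [Group V] (μ : V → ℝ) : ℕ → V → ℝ
  | 0 => fun x => if x = 1 then 1 else 0
  | (t + 1) => fun x => ∑' y : V, convPow μ t y * μ (y⁻¹ * x)

lemma convPow_nonneg {V : Type*} [Group V] (μ : V → ℝ) (hμ : ∀ x, 0 ≤ μ x) :
    ∀ t x, 0 ≤ convPow μ t x := by
  intro t
  induction t with
  | zero => intro x; simp only [convPow]; split <;> norm_num
  | succ t ih =>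
    intro x
    simp only [convPow]
    exact tsum_nonneg fun y => mul_nonneg (ih y) (hμ _)

lemma convPow_support_finite {V : Type*} [Group V] (μ : V → ℝ)
    (hμfin : (Function.support μ).Finite) :
    ∀ t, (Function.support (convPow μ t)).Finite := by
  intro t
  induction t with
  | zero =>
    apply Set.Finite.subset (Set.finite_singleton (1 : V))
    intro x hx
    simp only [Function.mem_support, convPow] at hx
    by_contra h
    simp only [Set.mem_singleton_iff] at h
    simp [h] at hx
  | succ t ih =>
    apply Set.Finite.subset (ih.mul hμfin)
    intro x hx
    simp only [Function.mem_support, convPow] at hx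
    have : ∃ y, convPow μ t y * μ (y⁻¹ * x) ≠ 0 := by
      by_contra h
      push_neg at h
      exact hx (by simpa using tsum_congr (fun y => h y))
    obtain ⟨y, hy⟩ := this
    exact ⟨y, Function.mem_support.2 (left_ne_zero_of_mul hy),
      y⁻¹ * x, Function.mem_support.2 (right_ne_zero_of_mul hy), by group⟩

lemma convPow_tsum_eq_one {V : Type*} [Group V] (μ : V → ℝ)
    (hμfin : (Function.support μ).Finite) (hμprob : ∑' x : V, μ x = 1) :
    ∀ t, ∑' x : V, convPow μ t x = 1 := by
  intro t
  induction t with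
  | zero => simp only [convPow]; exact tsum_ite_eq 1 1
  | succ t ih =>
    have hfin := convPow_support_finite μ hμfin t
    have hfin' := convPow_support_finite μ hμfin (t + 1)
    -- swap sums
    have hgsupp : (Function.support
        (fun p : V × V => convPow μ t p.1 * μ (p.1⁻¹ * p.2))).Finite := by
      apply Set.Finite.subset (hfin.prod (hfin.mul hμfin))
      rintro ⟨y, x⟩ hp
      simp only [Function.mem_support] at hp
      exact ⟨Function.mem_support.2 (left_ne_zero_of_mul hp),
        y, Function.mem_support.2 (left_ne_zero_of_mul hp),
        y⁻¹ * x, Function.mem_support.2 (right_ne_zero_of_mul hp), by group⟩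
    have hsum : Summable (fun p : V × V => convPow μ t p.1 * μ (p.1⁻¹ * p.2)) :=
      summable_of_finite_support hgsupp
    have hswap : ∑' x : V, ∑' y : V, convPow μ t y * μ (y⁻¹ * x)
        = ∑' y : V, ∑' x : V, convPow μ t y * μ (y⁻¹ * x) := by
      refine Summable.tsum_comm' ?_ ?_ ?_
      · exact hsum
      · intro y
        apply summable_of_finite_support
        apply Set.Finite.subset (hμfin.preimage (f := fun x => y⁻¹ * x)
          (mul_right_injective _).injOn)
        intro x hx
        exact Function.mem_support.2 (right_ne_zero_of_mul hx)
      · intro x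
        apply summable_of_finite_support
        apply Set.Finite.subset hfin
        intro y hy
        exact Function.mem_support.2 (left_ne_zero_of_mul hy)
    calc ∑' x : V, convPow μ (t+1) x
        = ∑' y : V, ∑' x : V, convPow μ t y * μ (y⁻¹ * x) := by
          simp only [convPow]; exact hswap
      _ = ∑' y : V, convPow μ t y * ∑' x : V, μ (y⁻¹ * x) := by
          refine tsum_congr fun y => ?_; rw [tsum_mul_left]
      _ = ∑' y : V, convPow μ t y * 1 := by
          refine tsum_congr fun y => ?_
          congr 1
          calc ∑' x : V, μ (y⁻¹ * x) = ∑' x : V, μ ((Equiv.mulLeft y⁻¹) x) := rfl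
            _ = ∑' x : V, μ x := (Equiv.mulLeft y⁻¹).tsum_eq μ
            _ = 1 := hμprob
      _ = 1 := by simp [ih]

/-- vanishing entropy plus the Carne–Varopoulos bound imply zero speed.
Let `μ` be a finitely supported step distribution on a group `V`, `d x` the word distance
from the identity to `x` (so that `d x ≤ t` on the support of `μ^t`), and suppose
`μ^t(x) ≤ C exp(-d(x)²/(Ct))`. If the entropy
`h = lim_t -(1/t) ∑_x μ^t(x) log μ^t(x)` equals `0`, then for every `α > 0`,
`P[d(id,X_t) ≥ α t] → 0`, i.e. the speed is `0`. -/
theorem zero_entropy_implies_zero_speed {V : Type*} [Group V]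
    (μ : V → ℝ) (d : V → ℕ) (C : ℝ) (hC : 0 < C)
    (hμ : ∀ x, 0 ≤ μ x) (hμfin : (Function.support μ).Finite)
    (hμprob : ∑' x : V, μ x = 1)
    (hd : ∀ (t : ℕ) (x : V), convPow μ t x ≠ 0 → (d x : ℝ) ≤ t)
    (hCV : ∀ (t : ℕ) (x : V), 1 ≤ t →
      convPow μ t x ≤ C * Real.exp (-((d x : ℝ)) ^ 2 / (C * t)))
    (hent : Filter.Tendsto
      (fun t : ℕ => -(1 / (t : ℝ)) * ∑' x : V, convPow μ t x * Real.log (convPow μ t x))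
      Filter.atTop (nhds 0)) :
    ∀ α : ℝ, 0 < α →
      Filter.Tendsto
        (fun t : ℕ => ∑' x : V, if α * t ≤ (d x : ℝ) then convPow μ t x else 0)
        Filter.atTop (nhds 0) := by
  intro α hα
  have hfin : ∀ t, (Function.support (convPow μ t)).Finite :=
    convPow_support_finite μ hμfin
  have hnn : ∀ t x, 0 ≤ convPow μ t x := convPow_nonneg μ hμ
  have hone : ∀ t, ∑' x : V, convPow μ t x = 1 := convPow_tsum_eq_one μ hμfin hμprob
  set S : ℕ → ℝ := fun t => ∑' x : V, convPow μ t x * Real.log (convPow μ t x) with hS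
  set g : ℕ → ℝ := fun t => (C / α ^ 2) * (Real.log C * (1 / (t : ℝ)) + -(1 / (t : ℝ)) * S t)
    with hg
  have hgtend : Filter.Tendsto g Filter.atTop (nhds 0) := by
    have h1 : Filter.Tendsto (fun t : ℕ => Real.log C * (1 / (t : ℝ)))
        Filter.atTop (nhds (Real.log C * 0)) :=
      Filter.Tendsto.const_mul _ tendsto_one_div_atTop_nhds_zero_nat
    have h2 := h1.add hent
    have h3 := h2.const_mul (C / α ^ 2)
    simpa [hg] using h3
  apply squeeze_zero' (g := g)
  · filter_upwards with t
    refine tsum_nonneg fun x => ?_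
    split_ifs with h
    exacts [hnn t x, le_rfl]
  · filter_upwards [Filter.eventually_ge_atTop 1] with t ht
    have ht0 : (0 : ℝ) < t := by exact_mod_cast ht
    set p : V → ℝ := fun x => convPow μ t x with hp
    have hsp : Summable p := summable_of_finite_support (hfin t)
    have hsub : ∀ (f : V → ℝ), (∀ x, p x = 0 → f x = 0) → Summable f := by
      intro f hf
      apply summable_of_finite_support
      apply Set.Finite.subset (hfin t)
      intro x hx
      simp only [Function.mem_support] at hx ⊢
      intro h0; exact hx (hf x h0)
    -- Claim A
    have hsum1 : Summable fun x => (α * t) ^ 2 * (if α * t ≤ (d x : ℝ) then p x else 0) := by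
      apply hsub; intro x h0; simp [h0]
    have hsum2 : Summable fun x => p x * (d x : ℝ) ^ 2 := by
      apply hsub; intro x h0; simp [h0]
    have hA : (α * t) ^ 2 * (∑' x : V, if α * t ≤ (d x : ℝ) then p x else 0)
        ≤ ∑' x : V, p x * (d x : ℝ) ^ 2 := by
      rw [← tsum_mul_left]
      refine Summable.tsum_le_tsum (fun x => ?_) hsum1 hsum2
      by_cases hx : α * t ≤ (d x : ℝ)
      · simp only [hx, if_true]
        rw [mul_comm (p x)]
        apply mul_le_mul_of_nonneg_right _ (hnn t x)
        exact pow_le_pow_left₀ (by positivity) hx 2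
      · simp only [hx, if_false, mul_zero]
        exact mul_nonneg (hnn t x) (by positivity)
    -- Claim B
    have hsum3 : Summable fun x => C * t * (p x * Real.log C - p x * Real.log (p x)) := by
      apply hsub; intro x h0; simp [h0]
    have hB : (∑' x : V, p x * (d x : ℝ) ^ 2)
        ≤ ∑' x : V, C * t * (p x * Real.log C - p x * Real.log (p x)) := by
      refine Summable.tsum_le_tsum (fun x => ?_) hsum2 hsum3
      rcases eq_or_lt_of_le (hnn t x) with h0 | h0
      · simp [hp, ← h0]
      · have hcv := hCV t x ht
        have hlog : Real.log (p x) ≤ Real.log C + (-((d x : ℝ)) ^ 2 / (C * t)) := by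
          calc Real.log (p x) ≤ Real.log (C * Real.exp (-((d x : ℝ)) ^ 2 / (C * t))) :=
                Real.log_le_log h0 hcv
            _ = Real.log C + (-((d x : ℝ)) ^ 2 / (C * t)) := by
                rw [Real.log_mul (ne_of_gt hC) (Real.exp_ne_zero _), Real.log_exp]
        have hCt : (0 : ℝ) < C * t := by positivity
        have h1 : ((d x : ℝ)) ^ 2 ≤ C * t * (Real.log C - Real.log (p x)) := by
          have h2 : ((d x : ℝ)) ^ 2 / (C * t) ≤ Real.log C - Real.log (p x) := by
            rw [neg_div] at hlog
            linarith
          calc ((d x : ℝ)) ^ 2 = (C * t) * (((d x : ℝ)) ^ 2 / (C * t)) := by field_simp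
            _ ≤ (C * t) * (Real.log C - Real.log (p x)) :=
                mul_le_mul_of_nonneg_left h2 hCt.le
        calc p x * (d x : ℝ) ^ 2 ≤ p x * (C * t * (Real.log C - Real.log (p x))) :=
              mul_le_mul_of_nonneg_left h1 (le_of_lt h0)
          _ = C * t * (p x * Real.log C - p x * Real.log (p x)) := by ring
    -- compute RHS of B
    have hsumlog : Summable fun x => p x * Real.log (p x) := by
      apply hsub; intro x h0; simp [h0]
    have hsumlogC : Summable fun x => p x * Real.log C := hsp.mul_right _
    have hRHS : (∑' x : V, C * t * (p x * Real.log C - p x * Real.log (p x)))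
        = C * t * (Real.log C - S t) := by
      rw [tsum_mul_left, Summable.tsum_sub hsumlogC hsumlog, tsum_mul_right, hone t]
      simp [hS, hp]
    have hmain : (α * t) ^ 2 * (∑' x : V, if α * t ≤ (d x : ℝ) then p x else 0)
        ≤ C * t * (Real.log C - S t) := by
      rw [← hRHS]; exact le_trans hA hB
    have hgt : g t * (α * t) ^ 2 = C * t * (Real.log C - S t) := by
      simp only [hg]
      field_simp
      ring
    have hpos : (0 : ℝ) < (α * t) ^ 2 := by positivity
    have : (∑' x : V, if α * t ≤ (d x : ℝ) then p x else 0) * (α * t) ^ 2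
        ≤ g t * (α * t) ^ 2 := by
      rw [hgt, mul_comm]; exact hmain
    exact le_of_mul_le_mul_right this hpos
  · exact hgtend
end
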